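/- arXiv:2302.00245 — 2 statements merged into one kernel-verified Lean document; each statement's English description precedes it below -/
import Mathlib

section
/- There exist constants δ₁ > 0 and C₂ > 0, depending only on m, α and β, such that for any solution (ũ^k_n, ṽ^k_n) of the inhomogeneous QLB scheme with h ∈ (0,1/2): if (|ũ^k_n|² + |ṽ^k_n|²)h ≤ δ₁ for a given k ≥ 0 and n ∈ ℤ, then | |ũ^{k+1}_{n+1}|² − |ũ^k_n|² |/h ≤ C₂((|ũ^k_n|² + |ṽ^k_n|²) + |ũ^k_n|²|ṽ^k_n|² + |g^k_n|²) and | |ṽ^{k+1}_{n−1}|² − |ṽ^k_n|² |/h ≤ C₂((|ũ^k_n|² + |ṽ^k_n|²) + |ũ^k_n|²|ṽ^k_n|² + |g^k_n|²). -/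
open Complex

noncomputable section

/-- `G(u,v) = conj(u)·v + u·conj(v)`. -/
def Gc (u v : ℂ) : ℂ := (starRingEnd ℂ) u * v + u * (starRingEnd ℂ) v

/-- One step of the quantum lattice Boltzmann (QLB) scheme:
`a, b` are the values `u^k_n, v^k_n` and `a', b'` the values `u^{k+1}_{n+1}, v^{k+1}_{n-1}`. -/
def QLBStep (h m α β : ℝ) (a b a' b' : ℂ) : Prop :=
  a' - a = (Complex.I * (m : ℂ) * (h : ℂ) / 2) * (b' + b)
      + (Complex.I * (α : ℂ) * (h : ℂ) / 2) * (a' + a) * ((‖b‖ ^ 2 : ℝ) : ℂ)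
      + (Complex.I * (β : ℂ) * (h : ℂ) / 2) * (b' + b) * Gc a b
  ∧ b' - b = (Complex.I * (m : ℂ) * (h : ℂ) / 2) * (a' + a)
      + (Complex.I * (α : ℂ) * (h : ℂ) / 2) * (b' + b) * ((‖a‖ ^ 2 : ℝ) : ℂ)
      + (Complex.I * (β : ℂ) * (h : ℂ) / 2) * (a' + a) * Gc a b

/-- `(u, v)` is a solution of the QLB scheme. -/
def IsQLB (h m α β : ℝ) (u v : ℕ → ℤ → ℂ) : Prop :=
  ∀ (k : ℕ) (n : ℤ), QLBStep h m α β (u k n) (v k n) (u (k + 1) (n + 1)) (v (k + 1) (n - 1))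

/-- One step of the inhomogeneous QLB scheme with sources `g1, g2`. -/
def QLBStepInhom (h m α β : ℝ) (g1 g2 : ℂ) (a b a' b' : ℂ) : Prop :=
  (a' - a) / (h : ℂ) = (Complex.I * (m : ℂ) / 2) * (b' + b)
      + (Complex.I * (α : ℂ) / 2) * (a' + a) * ((‖b‖ ^ 2 : ℝ) : ℂ)
      + (Complex.I * (β : ℂ) / 2) * (b' + b) * Gc a b + g1
  ∧ (b' - b) / (h : ℂ) = (Complex.I * (m : ℂ) / 2) * (a' + a)
      + (Complex.I * (α : ℂ) / 2) * (b' + b) * ((‖a‖ ^ 2 : ℝ) : ℂ)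
      + (Complex.I * (β : ℂ) / 2) * (a' + a) * Gc a b + g2

/-- `(u, v)` is a solution of the inhomogeneous QLB scheme with sources `g1, g2`. -/
def IsQLBInhom (h m α β : ℝ) (g1 g2 : ℕ → ℤ → ℂ) (u v : ℕ → ℤ → ℂ) : Prop :=
  ∀ (k : ℕ) (n : ℤ), QLBStepInhom h m α β (g1 k n) (g2 k n)
    (u k n) (v k n) (u (k + 1) (n + 1)) (v (k + 1) (n - 1))

lemma sqle (x y : ℝ) (hx : 0 ≤ x) (hy : 0 ≤ y) (h : x^2 ≤ 4*y^2) : x ≤ 2*y := by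
  nlinarith

lemma sqle1 (x : ℝ) (hx : 0 ≤ x) (h : x^2 ≤ 1) : x ≤ 1 := by nlinarith

lemma cube_ge (x : ℝ) (hx : 1 ≤ x) : x ≤ x^3 := by
  nlinarith [mul_nonneg (mul_nonneg (by linarith : (0:ℝ) ≤ x-1) (by linarith : (0:ℝ) ≤ x))
    (by linarith : (0:ℝ) ≤ x+1)]

lemma cube_ge1 (x : ℝ) (hx : 1 ≤ x) : (1:ℝ) ≤ x^3 := by
  nlinarith [mul_nonneg (mul_nonneg (by linarith : (0:ℝ) ≤ x-1) (by linarith : (0:ℝ) ≤ x))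
    (by linarith : (0:ℝ) ≤ x+1), mul_nonneg (by linarith : (0:ℝ) ≤ x-1) (by linarith : (0:ℝ) ≤ x)]

lemma csplit (c c1 c2 W B1 B2 : ℝ) (hW : 0 ≤ W) (hc1 : 0 ≤ c1) (hc2 : 0 ≤ c2)
    (habs : |c| ≤ c1 + c2) (hB1 : W ≤ B1) (hB2 : W ≤ B2) :
    |c| * W ≤ c1*B1 + c2*B2 := by
  have t0 := mul_le_mul_of_nonneg_right habs hW
  have t1 := mul_le_mul_of_nonneg_left hB1 hc1
  have t2 := mul_le_mul_of_nonneg_left hB2 hc2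
  linarith only [t0, t1, t2]

lemma massb (h P Q P' Q' G1 G2 : ℝ)
    (h2 : h < 1/2)
    (hPn : 0 ≤ P) (hQn : 0 ≤ Q)
    (hG1n : 0 ≤ G1) (hG2n : 0 ≤ G2)
    (hmasseq : P'^2 + Q'^2 ≤ P^2+Q^2 + ((P'+P)*G1 + (Q'+Q)*G2)*h)
    (hh2 : ((P'+P)*G1 + (Q'+Q)*G2) * h ≤ ((P'+P)*G1 + (Q'+Q)*G2) * (1/2)) :
    P'^2 + Q'^2 ≤ 4*(P+Q+G1+G2)^2 := by
  nlinarith [hmasseq, hh2, sq_nonneg (P' - 2*G1), sq_nonneg (Q' - 2*G2),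
    sq_nonneg (P - G1), sq_nonneg (Q - G2), mul_nonneg hPn hQn, mul_nonneg hG1n hG2n,
    mul_nonneg hPn hG2n, mul_nonneg hQn hG1n, mul_nonneg hPn hG1n, mul_nonneg hQn hG2n]

lemma realmain (m α β h P Q P' Q' G1 G2 DA DB WA WB ZI R1 c Gr : ℝ)
    (hm : 0 ≤ m) (h0 : 0 < h) (h2 : h < 1/2)
    (hPn : 0 ≤ P) (hQn : 0 ≤ Q) (hP'n : 0 ≤ P') (hQ'n : 0 ≤ Q')
    (hG1n : 0 ≤ G1) (hG2n : 0 ≤ G2) (hDAn : 0 ≤ DA) (hDBn : 0 ≤ DB)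
    (hWAn : 0 ≤ WA) (hWBn : 0 ≤ WB)
    (hGr : |Gr| ≤ 2*(P*Q)) (hc : c = m/2 + β*Gr/2)
    (hmasseq : P'^2 + Q'^2 ≤ P^2+Q^2 + ((P'+P)*G1 + (Q'+Q)*G2)*h)
    (hZIb1 : |ZI| ≤ (P'+P)*(Q'+Q))
    (hZIb2 : |ZI| ≤ 4*(P*Q) + (2*P*DB + DA*(2*Q+DB)))
    (hR1b : |R1| ≤ (P'+P)*G1)
    (hWA1 : WA ≤ Q'+Q) (hWA2 : WA ≤ 2*Q+DB) (hWB1 : WB ≤ P'+P) (hWB2 : WB ≤ 2*P+DA)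
    (hDAb : DA ≤ (|c| * WA + (|α|/2*Q^2) * WB + G1)*h)
    (hDBb : DB ≤ (|c| * WB + (|α|/2*P^2) * WA + G2)*h)
    (hδ : (P^2+Q^2)*h ≤ 1/(1+2*(|α|+|β|))) :
    |(-c*ZI + R1)| ≤ 1000*(m+|α|+|β|+1)^3*((P^2+Q^2) + P^2*Q^2 + (G1^2+G2^2)) := by
  have PQn : (0:ℝ) ≤ P*Q := mul_nonneg hPn hQn
  have hcabs : |c| ≤ m/2 + |β| * (P*Q) := by
    have h1 : |c| ≤ |m/2| + |β*Gr/2| := by rw [hc]; exact abs_add_le _ _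
    have h2' : |m/2| = m/2 := abs_of_nonneg (by linarith only [hm])
    have h3 : |β*Gr/2| = |β| * |Gr|/2 := by rw [abs_div, abs_mul]; norm_num
    have h4 : |β| * |Gr| ≤ |β| * (2*(P*Q)) := mul_le_mul_of_nonneg_left hGr (abs_nonneg β)
    calc |c| ≤ |m/2| + |β*Gr/2| := h1
      _ = m/2 + |β| * |Gr|/2 := by rw [h2', h3]
      _ ≤ m/2 + |β| * (2*(P*Q))/2 := by linarith only [h4]
      _ = m/2 + |β| * (P*Q) := by ring
  -- mass bound
  have hm4 : P'^2 + Q'^2 ≤ 4*(P+Q+G1+G2)^2 := by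
    have hsum_n : 0 ≤ (P'+P)*G1 + (Q'+Q)*G2 := by
      have u1 := mul_nonneg (by linarith only [hP'n, hPn] : (0:ℝ) ≤ P'+P) hG1n
      have u2 := mul_nonneg (by linarith only [hQ'n, hQn] : (0:ℝ) ≤ Q'+Q) hG2n
      linarith only [u1, u2]
    have hh2 : ((P'+P)*G1 + (Q'+Q)*G2) * h ≤ ((P'+P)*G1 + (Q'+Q)*G2) * (1/2) :=
      mul_le_mul_of_nonneg_left h2.le hsum_n
    exact massb h P Q P' Q' G1 G2 h2 hPn hQn hG1n hG2n hmasseq hh2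
  have hσn : (0:ℝ) ≤ P+Q+G1+G2 := by linarith only [hPn, hQn, hG1n, hG2n]
  have hP'σ : P' ≤ 2*(P+Q+G1+G2) := by
    refine sqle _ _ hP'n hσn ?_
    linarith only [hm4, sq_nonneg Q']
  have hQ'σ : Q' ≤ 2*(P+Q+G1+G2) := by
    refine sqle _ _ hQ'n hσn ?_
    linarith only [hm4, sq_nonneg P']
  have hWA3 : WA ≤ 3*(P+Q+G1+G2) := by linarith only [hWA1, hQ'σ, hPn, hG1n, hG2n]
  have hWB3 : WB ≤ 3*(P+Q+G1+G2) := by linarith only [hWB1, hP'σ, hQn, hG1n, hG2n]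
  -- recursion-shaped increment bounds
  have hDAb' : DA ≤ ((m/2)*(3*(P+Q+G1+G2)) + |β| * (P*Q)*(2*Q+DB)
      + (|α|/2)*Q^2*(2*P+DA) + G1) * h := by
    have w1 : |c| * WA ≤ (m/2)*(3*(P+Q+G1+G2)) + (|β| * (P*Q))*(2*Q+DB) :=
      csplit c (m/2) (|β| * (P*Q)) WA _ _ hWAn (by linarith only [hm])
        (mul_nonneg (abs_nonneg β) PQn) hcabs hWA3 hWA2
    have w2 : (|α|/2*Q^2) * WB ≤ (|α|/2*Q^2)*(2*P+DA) :=
      mul_le_mul_of_nonneg_left hWB2 (by positivity)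
    have w3 := mul_le_mul_of_nonneg_right (by linarith only [w1, w2] :
      |c| * WA + (|α|/2*Q^2) * WB + G1
      ≤ (m/2)*(3*(P+Q+G1+G2)) + (|β| * (P*Q))*(2*Q+DB) + (|α|/2*Q^2)*(2*P+DA) + G1) h0.le
    have w4 := le_trans hDAb w3
    linarith only [w4]
  have hDBb' : DB ≤ ((m/2)*(3*(P+Q+G1+G2)) + |β| * (P*Q)*(2*P+DA)
      + (|α|/2)*P^2*(2*Q+DB) + G2) * h := by
    have w1 : |c| * WB ≤ (m/2)*(3*(P+Q+G1+G2)) + (|β| * (P*Q))*(2*P+DA) :=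
      csplit c (m/2) (|β| * (P*Q)) WB _ _ hWBn (by linarith only [hm])
        (mul_nonneg (abs_nonneg β) PQn) hcabs hWB3 hWB2
    have w2 : (|α|/2*P^2) * WA ≤ (|α|/2*P^2)*(2*Q+DB) :=
      mul_le_mul_of_nonneg_left hWA2 (by positivity)
    have w3 := mul_le_mul_of_nonneg_right (by linarith only [w1, w2] :
      |c| * WB + (|α|/2*P^2) * WA + G2
      ≤ (m/2)*(3*(P+Q+G1+G2)) + (|β| * (P*Q))*(2*P+DA) + (|α|/2*P^2)*(2*Q+DB) + G2) h0.le
    have w4 := le_trans hDBb w3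
    linarith only [w4]
  -- smallness facts
  have hden : (0:ℝ) < 1+2*(|α|+|β|) := by positivity
  have hE1 : (P^2+Q^2)*h ≤ 1 := by
    refine le_trans hδ ?_
    rw [div_le_one hden]
    linarith only [abs_nonneg α, abs_nonneg β]
  have hαE : |α| * ((P^2+Q^2)*h) ≤ 1/2 := by
    have l1 : |α| * ((P^2+Q^2)*h) ≤ |α| * (1/(1+2*(|α|+|β|))) :=
      mul_le_mul_of_nonneg_left hδ (abs_nonneg α)
    have l2 : |α| * (1/(1+2*(|α|+|β|))) ≤ 1/2 := by
      rw [mul_one_div, div_le_iff₀ hden]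
      linarith only [abs_nonneg α, abs_nonneg β]
    linarith only [l1, l2]
  have hβE : |β| * ((P^2+Q^2)*h) ≤ 1/2 := by
    have l1 : |β| * ((P^2+Q^2)*h) ≤ |β| * (1/(1+2*(|α|+|β|))) :=
      mul_le_mul_of_nonneg_left hδ (abs_nonneg β)
    have l2 : |β| * (1/(1+2*(|α|+|β|))) ≤ 1/2 := by
      rw [mul_one_div, div_le_iff₀ hden]
      linarith only [abs_nonneg α, abs_nonneg β]
    linarith only [l1, l2]
  have tPQ : (P*Q)*h ≤ ((P^2+Q^2)*h)/2 := by
    linarith only [mul_nonneg (sq_nonneg (P-Q)) h0.le]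
  have hbq : |β| * ((P*Q)*h) ≤ 1/4 := by
    linarith only [mul_le_mul_of_nonneg_left tPQ (abs_nonneg β), hβE]
  have tQ : Q^2*h ≤ (P^2+Q^2)*h := by linarith only [mul_nonneg (sq_nonneg P) h0.le]
  have tP : P^2*h ≤ (P^2+Q^2)*h := by linarith only [mul_nonneg (sq_nonneg Q) h0.le]
  have haqQ : (|α|/2)*(Q^2*h) ≤ 1/4 := by
    linarith only [mul_le_mul_of_nonneg_left tQ (abs_nonneg α), hαE]
  have haqP : (|α|/2)*(P^2*h) ≤ 1/4 := by
    linarith only [mul_le_mul_of_nonneg_left tP (abs_nonneg α), hαE]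
  have r1 : |β| * (P*Q)*DB*h ≤ (1/4)*DB := by
    linarith only [mul_le_mul_of_nonneg_right hbq hDBn]
  have r2 : |β| * (P*Q)*DA*h ≤ (1/4)*DA := by
    linarith only [mul_le_mul_of_nonneg_right hbq hDAn]
  have r3 : (|α|/2)*Q^2*DA*h ≤ (1/4)*DA := by
    linarith only [mul_le_mul_of_nonneg_right haqQ hDAn]
  have r4 : (|α|/2)*P^2*DB*h ≤ (1/4)*DB := by
    linarith only [mul_le_mul_of_nonneg_right haqP hDBn]
  have hS0 : DA + DB ≤ (6*m*(P+Q+G1+G2) + (4*|β|+2*|α|)*((P*Q)*(P+Q)) + 2*(G1+G2)) * h := by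
    linarith only [hDAb', hDBb', r1, r2, r3, r4]
  have hσpn : (0:ℝ) ≤ P+Q := by linarith only [hPn, hQn]
  have hS : DA + DB ≤ 8*(m+|α|+|β|+1)*h*((P+Q+G1+G2) + (P*Q)*(P+Q)) := by
    have a1 : 0 ≤ m*((P+Q+G1+G2)*h) := mul_nonneg hm (mul_nonneg hσn h0.le)
    have a2 : 0 ≤ |α| * ((P+Q+G1+G2)*h) := mul_nonneg (abs_nonneg α) (mul_nonneg hσn h0.le)
    have a3 : 0 ≤ |β| * ((P+Q+G1+G2)*h) := mul_nonneg (abs_nonneg β) (mul_nonneg hσn h0.le)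
    have b0 : 0 ≤ ((P*Q)*(P+Q))*h := mul_nonneg (mul_nonneg PQn hσpn) h0.le
    have b1 : 0 ≤ m*(((P*Q)*(P+Q))*h) := mul_nonneg hm b0
    have b2 : 0 ≤ |α| * (((P*Q)*(P+Q))*h) := mul_nonneg (abs_nonneg α) b0
    have b3 : 0 ≤ |β| * (((P*Q)*(P+Q))*h) := mul_nonneg (abs_nonneg β) b0
    have c1 : 0 ≤ (P+Q)*h := mul_nonneg hσpn h0.le
    have c2 : 0 ≤ (G1+G2)*h := mul_nonneg (by linarith only [hG1n, hG2n]) h0.le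
    linarith only [hS0, a1, a2, a3, b0, b1, b2, b3, c1, c2]
  -- corrections
  have hSx : 2*P*DB + DA*(2*Q+DB) ≤ 2*(P+Q)*(DA+DB) + (DA+DB)^2 := by
    linarith only [mul_nonneg hPn hDAn, mul_nonneg hQn hDBn, mul_nonneg hDAn hDBn,
      sq_nonneg DA, sq_nonneg DB]
  have f1 : h*(P+Q)^2 ≤ 2 := by
    linarith only [hE1, mul_nonneg (sq_nonneg (P-Q)) h0.le]
  have f3 : h*(P*Q) ≤ 1/2 := by
    linarith only [hE1, mul_nonneg (sq_nonneg (P-Q)) h0.le]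
  have f5 : h*(h*(P+Q)^2) ≤ 1 := by
    have := mul_le_mul_of_nonneg_left f1 h0.le
    linarith only [this, h2, h0.le]
  have f2 : h*(P+Q) ≤ 1 := by
    refine sqle1 _ (mul_nonneg h0.le hσpn) ?_
    calc (h*(P+Q))^2 = h*(h*(P+Q)^2) := by ring
      _ ≤ 1 := f5
  have f4 : (h*(P*Q))*(h*(P+Q)^2) ≤ 1 := by
    have := mul_le_mul f3 f1 (mul_nonneg h0.le (sq_nonneg (P+Q))) (by norm_num)
    linarith only [this]
  have hK16 : (0:ℝ) ≤ 16*(m+|α|+|β|+1) := by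
    linarith only [hm, abs_nonneg α, abs_nonneg β]
  have hK64 : (0:ℝ) ≤ 64*(m+|α|+|β|+1)^2 := by positivity
  have coreA : (P*Q)*(2*(P+Q))*(DA+DB)
      ≤ 16*(m+|α|+|β|+1)*(2*(P*Q) + (P*Q)*(G1+G2) + 2*(P^2*Q^2)) := by
    have st2 : (P*Q)*(2*(P+Q))*(DA+DB)
        ≤ (P*Q)*(2*(P+Q))*(8*(m+|α|+|β|+1)*h*((P+Q+G1+G2) + (P*Q)*(P+Q))) :=
      mul_le_mul_of_nonneg_left hS (by positivity)
    have st3 : (P*Q)*(2*(P+Q))*(8*(m+|α|+|β|+1)*h*((P+Q+G1+G2) + (P*Q)*(P+Q)))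
        = 16*(m+|α|+|β|+1)*((P*Q)*(h*(P+Q)^2) + (P*Q)*((h*(P+Q))*(G1+G2))
            + (P^2*Q^2)*(h*(P+Q)^2)) := by ring
    have i1 : (P*Q)*(h*(P+Q)^2) ≤ (P*Q)*2 := mul_le_mul_of_nonneg_left f1 PQn
    have i2a : (h*(P+Q))*(G1+G2) ≤ 1*(G1+G2) :=
      mul_le_mul_of_nonneg_right f2 (by linarith only [hG1n, hG2n])
    have i2 : (P*Q)*((h*(P+Q))*(G1+G2)) ≤ (P*Q)*(G1+G2) := by
      have := mul_le_mul_of_nonneg_left i2a PQn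
      linarith only [this]
    have i3 : (P^2*Q^2)*(h*(P+Q)^2) ≤ (P^2*Q^2)*2 :=
      mul_le_mul_of_nonneg_left f1 (by positivity)
    have i4 := mul_le_mul_of_nonneg_left (by linarith only [i1, i2, i3] :
      (P*Q)*(h*(P+Q)^2) + (P*Q)*((h*(P+Q))*(G1+G2)) + (P^2*Q^2)*(h*(P+Q)^2)
        ≤ 2*(P*Q) + (P*Q)*(G1+G2) + 2*(P^2*Q^2)) hK16
    calc (P*Q)*(2*(P+Q))*(DA+DB) ≤ _ := st2
      _ = _ := st3
      _ ≤ _ := i4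
  have hWn : 0 ≤ (P+Q+G1+G2) + (P*Q)*(P+Q) := by
    have := mul_nonneg PQn hσpn
    linarith only [this, hσn]
  have hRn : 0 ≤ 8*(m+|α|+|β|+1)*h*((P+Q+G1+G2) + (P*Q)*(P+Q)) := by
    have h8 : (0:ℝ) ≤ 8*(m+|α|+|β|+1) := by linarith only [hm, abs_nonneg α, abs_nonneg β]
    exact mul_nonneg (mul_nonneg h8 h0.le) hWn
  have hSn : 0 ≤ DA + DB := by linarith only [hDAn, hDBn]
  have ex : ((P+Q+G1+G2) + (P*Q)*(P+Q))^2
      ≤ 3*(P+Q)^2 + 3*(G1+G2)^2 + 3*((P^2*Q^2)*(P+Q)^2) := by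
    linarith only [sq_nonneg ((P+Q)-(G1+G2)), sq_nonneg ((P+Q)-(P*Q)*(P+Q)),
      sq_nonneg ((G1+G2)-(P*Q)*(P+Q))]
  have coreB : (P*Q)*((DA+DB)*(DA+DB))
      ≤ 64*(m+|α|+|β|+1)^2*(3*(P*Q) + (3/2)*(G1^2+G2^2) + 3*(P^2*Q^2)) := by
    have sq' : (DA+DB)*(DA+DB)
        ≤ (8*(m+|α|+|β|+1)*h*((P+Q+G1+G2)+(P*Q)*(P+Q)))
          *(8*(m+|α|+|β|+1)*h*((P+Q+G1+G2)+(P*Q)*(P+Q))) :=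
      mul_le_mul hS hS hSn hRn
    have s1 := mul_le_mul_of_nonneg_left sq' PQn
    have s2 : (P*Q)*((8*(m+|α|+|β|+1)*h*((P+Q+G1+G2)+(P*Q)*(P+Q)))
          *(8*(m+|α|+|β|+1)*h*((P+Q+G1+G2)+(P*Q)*(P+Q))))
        = 64*(m+|α|+|β|+1)^2*((P*Q)*(h^2*(((P+Q+G1+G2)+(P*Q)*(P+Q))^2))) := by ring
    have s3 : (P*Q)*(h^2*(((P+Q+G1+G2)+(P*Q)*(P+Q))^2))
        ≤ (P*Q)*(h^2*(3*(P+Q)^2 + 3*(G1+G2)^2 + 3*((P^2*Q^2)*(P+Q)^2))) :=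
      mul_le_mul_of_nonneg_left (mul_le_mul_of_nonneg_left ex (sq_nonneg h)) PQn
    have j1 : (P*Q)*(h^2*(P+Q)^2) ≤ P*Q := by
      have := mul_le_mul_of_nonneg_left f5 PQn
      linarith only [this]
    have u1 : h*(G1+G2)^2 ≤ (1/2)*(G1+G2)^2 :=
      mul_le_mul_of_nonneg_right h2.le (sq_nonneg (G1+G2))
    have u2 : (h*(P*Q))*(h*(G1+G2)^2) ≤ (1/2)*((1/2)*(G1+G2)^2) :=
      mul_le_mul f3 u1 (mul_nonneg h0.le (sq_nonneg (G1+G2))) (by norm_num)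
    have j2 : (P*Q)*(h^2*(G1+G2)^2) ≤ (1/2)*(G1^2+G2^2) := by
      linarith only [u2, sq_nonneg (G1-G2)]
    have j3 : (P^2*Q^2)*((h*(P*Q))*(h*(P+Q)^2)) ≤ (P^2*Q^2)*1 :=
      mul_le_mul_of_nonneg_left f4 (by positivity)
    have inner : (P*Q)*(h^2*(3*(P+Q)^2 + 3*(G1+G2)^2 + 3*((P^2*Q^2)*(P+Q)^2)))
        ≤ 3*(P*Q) + (3/2)*(G1^2+G2^2) + 3*(P^2*Q^2) := by
      linarith only [j1, j2, j3]
    have i5 := mul_le_mul_of_nonneg_left inner hK64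
    have s4 := mul_le_mul_of_nonneg_left s3 hK64
    calc (P*Q)*((DA+DB)*(DA+DB)) ≤ _ := s1
      _ = _ := s2
      _ ≤ _ := s4
      _ ≤ _ := i5
  -- pieces
  have hDn : (0:ℝ) ≤ (P^2+Q^2) + P^2*Q^2 + (G1^2+G2^2) := by positivity
  have hσ4D : (P+Q+G1+G2)^2 ≤ 4*((P^2+Q^2) + P^2*Q^2 + (G1^2+G2^2)) := by
    linarith only [sq_nonneg (P-Q), sq_nonneg (P-G1), sq_nonneg (P-G2), sq_nonneg (Q-G1),
      sq_nonneg (Q-G2), sq_nonneg (G1-G2), sq_nonneg (P*Q)]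
  have hK1 : (1:ℝ) ≤ m+|α|+|β|+1 := by linarith only [hm, abs_nonneg α, abs_nonneg β]
  have hPPσ : P'+P ≤ 3*(P+Q+G1+G2) := by linarith only [hP'σ, hQn, hG1n, hG2n]
  have hQQσ : Q'+Q ≤ 3*(P+Q+G1+G2) := by linarith only [hQ'σ, hPn, hG1n, hG2n]
  have piece1 : (m/2)*((P'+P)*(Q'+Q))
      ≤ 18*((m+|α|+|β|+1)*((P^2+Q^2) + P^2*Q^2 + (G1^2+G2^2))) := by
    have hprod : (P'+P)*(Q'+Q) ≤ (3*(P+Q+G1+G2))*(3*(P+Q+G1+G2)) :=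
      mul_le_mul hPPσ hQQσ (by linarith only [hQ'n, hQn]) (by linarith only [hσn])
    have c1 := mul_le_mul_of_nonneg_left hprod (by linarith only [hm] : (0:ℝ) ≤ m/2)
    have c2 := mul_le_mul_of_nonneg_left hσ4D (by linarith only [hm] : (0:ℝ) ≤ 9*(m/2))
    have c3 := mul_le_mul_of_nonneg_right
      (by linarith only [abs_nonneg α, abs_nonneg β] : m ≤ m+|α|+|β|+1) hDn
    linarith only [c1, c2, c3]
  have hβK : |β| ≤ m+|α|+|β|+1 := by linarith only [hm, abs_nonneg α]
  have piece2 : |β| * ((P*Q)*(4*(P*Q)))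
      ≤ 4*((m+|α|+|β|+1)*((P^2+Q^2) + P^2*Q^2 + (G1^2+G2^2))) := by
    have c1 := mul_le_mul_of_nonneg_right hβK
      (by positivity : (0:ℝ) ≤ (P*Q)*(4*(P*Q)))
    have c2 := mul_le_mul_of_nonneg_left
      (by linarith only [sq_nonneg P, sq_nonneg Q, sq_nonneg G1, sq_nonneg G2] :
        P^2*Q^2 ≤ (P^2+Q^2) + P^2*Q^2 + (G1^2+G2^2))
      (by linarith only [hK1] : (0:ℝ) ≤ 4*(m+|α|+|β|+1))
    linarith only [c1, c2]
  have piece4 : (P'+P)*G1 ≤ 12*((P^2+Q^2) + P^2*Q^2 + (G1^2+G2^2)) := by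
    have c1 := mul_le_mul_of_nonneg_right hPPσ hG1n
    have c2 : (3*(P+Q+G1+G2))*G1 ≤ (3*(P+Q+G1+G2))*(P+Q+G1+G2) :=
      mul_le_mul_of_nonneg_left (by linarith only [hPn, hQn, hG2n] : G1 ≤ P+Q+G1+G2)
        (by linarith only [hσn])
    linarith only [c1, c2, hσ4D]
  have XN : (0:ℝ) ≤ (P*Q)*(2*P*DB + DA*(2*Q+DB)) := by
    refine mul_nonneg PQn ?_
    have u1 := mul_nonneg hPn hDBn
    have u2 := mul_nonneg hDAn (by linarith only [hQn, hDBn] : (0:ℝ) ≤ 2*Q+DB)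
    linarith only [u1, u2]
  have mX : (P*Q)*(2*P*DB + DA*(2*Q+DB))
      ≤ 72*((m+|α|+|β|+1)*((P^2+Q^2) + P^2*Q^2 + (G1^2+G2^2)))
        + 288*((m+|α|+|β|+1)^2*((P^2+Q^2) + P^2*Q^2 + (G1^2+G2^2))) := by
    have s0 := mul_le_mul_of_nonneg_left hSx PQn
    have dA : 2*(P*Q) + (P*Q)*(G1+G2) + 2*(P^2*Q^2)
        ≤ (9/2)*((P^2+Q^2) + P^2*Q^2 + (G1^2+G2^2)) := by
      linarith only [sq_nonneg (P-Q), sq_nonneg (P*Q-(G1+G2)), sq_nonneg (G1-G2),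
        sq_nonneg (P*Q), sq_nonneg P, sq_nonneg Q, sq_nonneg G1, sq_nonneg G2]
    have dB : 3*(P*Q) + (3/2)*(G1^2+G2^2) + 3*(P^2*Q^2)
        ≤ (9/2)*((P^2+Q^2) + P^2*Q^2 + (G1^2+G2^2)) := by
      linarith only [sq_nonneg (P-Q), sq_nonneg (P*Q), sq_nonneg G1, sq_nonneg G2,
        sq_nonneg P, sq_nonneg Q]
    have m2 := mul_le_mul_of_nonneg_left dA hK16
    have m3 := mul_le_mul_of_nonneg_left dB hK64
    linarith only [s0, coreA, coreB, m2, m3]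
  have piece3 : |β| * ((P*Q)*(2*P*DB + DA*(2*Q+DB)))
      ≤ 360*((m+|α|+|β|+1)^3*((P^2+Q^2) + P^2*Q^2 + (G1^2+G2^2))) := by
    have c1 := mul_le_mul_of_nonneg_right hβK XN
    have c2 := mul_le_mul_of_nonneg_left mX (by linarith only [hK1] : (0:ℝ) ≤ m+|α|+|β|+1)
    have c3 : (0:ℝ) ≤ ((m+|α|+|β|+1)^2*((m+|α|+|β|+1)-1))
        *((P^2+Q^2) + P^2*Q^2 + (G1^2+G2^2)) :=
      mul_nonneg (mul_nonneg (sq_nonneg _) (by linarith only [hK1])) hDn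
    linarith only [c1, c2, c3]
  -- final assembly
  have w0 : |(-c*ZI + R1)| ≤ |c| * |ZI| + |R1| := by
    calc |(-c*ZI + R1)| ≤ |(-c*ZI)| + |R1| := abs_add_le _ _
      _ = |c| * |ZI| + |R1| := by rw [abs_mul, abs_neg]
  have w1 : |c| * |ZI| ≤ (m/2)*|ZI| + (|β| * (P*Q))*|ZI| := by
    have := mul_le_mul_of_nonneg_right hcabs (abs_nonneg ZI)
    linarith only [this]
  have w2 : (m/2)*|ZI| ≤ (m/2)*((P'+P)*(Q'+Q)) :=
    mul_le_mul_of_nonneg_left hZIb1 (by linarith only [hm])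
  have w3 : (|β| * (P*Q))*|ZI| ≤ (|β| * (P*Q))*(4*(P*Q) + (2*P*DB + DA*(2*Q+DB))) :=
    mul_le_mul_of_nonneg_left hZIb2 (mul_nonneg (abs_nonneg β) PQn)
  have t1 : (0:ℝ) ≤ ((m+|α|+|β|+1)^3 - (m+|α|+|β|+1))
      *((P^2+Q^2) + P^2*Q^2 + (G1^2+G2^2)) :=
    mul_nonneg (by linarith only [cube_ge _ hK1]) hDn
  have t2 : (0:ℝ) ≤ ((m+|α|+|β|+1)^3 - 1)*((P^2+Q^2) + P^2*Q^2 + (G1^2+G2^2)) :=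
    mul_nonneg (by linarith only [cube_ge1 _ hK1]) hDn
  have t0 : (0:ℝ) ≤ (m+|α|+|β|+1)^3*((P^2+Q^2) + P^2*Q^2 + (G1^2+G2^2)) :=
    mul_nonneg (by linarith only [cube_ge1 _ hK1] : (0:ℝ) ≤ (m+|α|+|β|+1)^3) hDn
  linarith only [w0, w1, w2, w3, hR1b, piece1, piece2, piece3, piece4, t0, t1, t2]


lemma Gc_comm (a b : ℂ) : Gc a b = Gc b a := by unfold Gc; ring

lemma Gc_eq (a b : ℂ) : Gc a b = (((Gc a b).re : ℝ) : ℂ) := by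
  apply Complex.ext
  · simp
  · simp [Gc, Complex.add_im, Complex.mul_im, Complex.conj_re, Complex.conj_im]
    ring

lemma Gc_re_bound (a b : ℂ) :
    |(Gc a b).re| ≤ 2 * (‖a‖ * ‖b‖) := by
  calc |(Gc a b).re| ≤ ‖Gc a b‖ := Complex.abs_re_le_norm _
    _ ≤ ‖(starRingEnd ℂ) a * b‖ + ‖a * (starRingEnd ℂ) b‖ :=
        norm_add_le _ _
    _ = 2 * (‖a‖ * ‖b‖) := by
        simp [norm_mul, Complex.norm_conj]; ring

lemma reh1 (z w : ℂ) :
    (‖w‖)^2 - (‖z‖)^2 = ((starRingEnd ℂ) (w + z) * (w - z)).re := by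
  simp [Complex.sq_norm, Complex.normSq_apply, Complex.mul_re, Complex.add_re, Complex.add_im,
    Complex.sub_re, Complex.sub_im, Complex.conj_re, Complex.conj_im]
  ring

lemma key_id (z w g : ℂ) (c d h : ℝ) :
    ((starRingEnd ℂ) z * ((Complex.I * (c:ℂ) * w + Complex.I * (d:ℂ) * z + g) * (h:ℂ))).re
      = (-c * ((starRingEnd ℂ) z * w).im + ((starRingEnd ℂ) z * g).re) * h := by
  simp [Complex.mul_re, Complex.mul_im, Complex.add_re, Complex.add_im,
    Complex.I_re, Complex.I_im, Complex.ofReal_re, Complex.ofReal_im,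
    Complex.conj_re, Complex.conj_im]
  ring

lemma im_conj_swap (z w : ℂ) :
    ((starRingEnd ℂ) w * z).im = -(((starRingEnd ℂ) z * w).im) := by
  simp [Complex.mul_im, Complex.conj_re, Complex.conj_im]
  ring

lemma abs_I_mul_real (c : ℝ) (w : ℂ) :
    ‖Complex.I * (c:ℂ) * w‖ = |c| * ‖w‖ := by
  rw [norm_mul, norm_mul, Complex.norm_I, Complex.norm_real, Real.norm_eq_abs, one_mul]

lemma master (m α β h : ℝ) (hm : 0 ≤ m) (h0 : 0 < h) (h2 : h < 1/2)
    (a b a' b' g1 g2 : ℂ)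
    (e1 : (a' - a) / (h:ℂ) = (Complex.I * (m : ℂ) / 2) * (b' + b)
      + (Complex.I * (α : ℂ) / 2) * (a' + a) * ((‖b‖ ^ 2 : ℝ) : ℂ)
      + (Complex.I * (β : ℂ) / 2) * (b' + b) * Gc a b + g1)
    (e2 : (b' - b) / (h:ℂ) = (Complex.I * (m : ℂ) / 2) * (a' + a)
      + (Complex.I * (α : ℂ) / 2) * (b' + b) * ((‖a‖ ^ 2 : ℝ) : ℂ)
      + (Complex.I * (β : ℂ) / 2) * (a' + a) * Gc a b + g2)
    (hδ : (‖a‖ ^ 2 + ‖b‖ ^ 2) * h ≤ 1 / (1 + 2*(|α| + |β|))) :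
    |‖a'‖ ^ 2 - ‖a‖ ^ 2| / h
      ≤ 1000 * (m + |α| + |β| + 1)^3 *
        ((‖a‖ ^ 2 + ‖b‖ ^ 2)
          + ‖a‖ ^ 2 * ‖b‖ ^ 2
          + (‖g1‖ ^ 2 + ‖g2‖ ^ 2)) := by
  have hh : (h:ℂ) ≠ 0 := by exact_mod_cast h0.ne'
  -- multiplied canonical equations
  have e1' : a' - a = (Complex.I * ((m/2 + β*(Gc a b).re/2 : ℝ):ℂ) * (b' + b)
      + Complex.I * ((α/2*(‖b‖)^2 : ℝ):ℂ) * (a' + a) + g1) * (h:ℂ) := by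
    rw [div_eq_iff hh] at e1
    rw [e1]
    conv_lhs => rw [Gc_eq a b]
    push_cast
    ring
  have e2' : b' - b = (Complex.I * ((m/2 + β*(Gc a b).re/2 : ℝ):ℂ) * (a' + a)
      + Complex.I * ((α/2*(‖a‖)^2 : ℝ):ℂ) * (b' + b) + g2) * (h:ℂ) := by
    rw [div_eq_iff hh] at e2
    rw [e2]
    conv_lhs => rw [Gc_eq a b]
    push_cast
    ring
  have key1 : ‖a'‖ ^2 - ‖a‖ ^2
      = (-(m/2 + β*(Gc a b).re/2) * ((starRingEnd ℂ) (a'+a) * (b'+b)).im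
        + ((starRingEnd ℂ) (a'+a) * g1).re) * h := by
    rw [reh1 a a', e1']
    exact key_id (a'+a) (b'+b) g1 (m/2 + β*(Gc a b).re/2) (α/2*(‖b‖)^2) h
  have key2 : ‖b'‖ ^2 - ‖b‖ ^2
      = ((m/2 + β*(Gc a b).re/2) * ((starRingEnd ℂ) (a'+a) * (b'+b)).im
        + ((starRingEnd ℂ) (b'+b) * g2).re) * h := by
    rw [reh1 b b', e2']
    rw [key_id (b'+b) (a'+a) g2 (m/2 + β*(Gc a b).re/2) (α/2*(‖a‖)^2) h]
    rw [im_conj_swap (a'+a) (b'+b)]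
    ring
  -- abs facts
  have hR1b : |((starRingEnd ℂ) (a'+a) * g1).re|
      ≤ (‖a'‖ + ‖a‖) * ‖g1‖ := by
    calc |((starRingEnd ℂ) (a'+a) * g1).re|
        ≤ ‖(starRingEnd ℂ) (a'+a) * g1‖ := Complex.abs_re_le_norm _
      _ = ‖a'+a‖ * ‖g1‖ := by rw [norm_mul, Complex.norm_conj]
      _ ≤ (‖a'‖ + ‖a‖) * ‖g1‖ :=
          mul_le_mul_of_nonneg_right (norm_add_le a' a) (norm_nonneg g1)
  have hR2b : |((starRingEnd ℂ) (b'+b) * g2).re|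
      ≤ (‖b'‖ + ‖b‖) * ‖g2‖ := by
    calc |((starRingEnd ℂ) (b'+b) * g2).re|
        ≤ ‖(starRingEnd ℂ) (b'+b) * g2‖ := Complex.abs_re_le_norm _
      _ = ‖b'+b‖ * ‖g2‖ := by rw [norm_mul, Complex.norm_conj]
      _ ≤ (‖b'‖ + ‖b‖) * ‖g2‖ :=
          mul_le_mul_of_nonneg_right (norm_add_le b' b) (norm_nonneg g2)
  have hmasseq : ‖a'‖ ^2 + ‖b'‖ ^2
      ≤ ‖a‖ ^2 + ‖b‖ ^2
        + ((‖a'‖ + ‖a‖) * ‖g1‖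
          + (‖b'‖ + ‖b‖) * ‖g2‖)*h := by
    have s1 := le_trans (le_abs_self _) hR1b
    have s2 := le_trans (le_abs_self _) hR2b
    have s3 := mul_le_mul_of_nonneg_right (add_le_add s1 s2) h0.le
    linarith only [key1, key2, s3]
  have hZIb1 : |((starRingEnd ℂ) (a'+a) * (b'+b)).im|
      ≤ (‖a'‖ + ‖a‖) * (‖b'‖ + ‖b‖) := by
    calc |((starRingEnd ℂ) (a'+a) * (b'+b)).im|
        ≤ ‖(starRingEnd ℂ) (a'+a) * (b'+b)‖ := Complex.abs_im_le_norm _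
      _ = ‖a'+a‖ * ‖b'+b‖ := by rw [norm_mul, Complex.norm_conj]
      _ ≤ (‖a'‖ + ‖a‖) * (‖b'‖ + ‖b‖) :=
          mul_le_mul (norm_add_le a' a) (norm_add_le b' b)
            (norm_nonneg _) (by positivity)
  have habs_b2 : ‖b' + b‖ ≤ 2*‖b‖ + ‖b'-b‖ := by
    calc ‖b' + b‖ = ‖(b'-b) + 2*b‖ := by ring_nf
      _ ≤ ‖b'-b‖ + ‖2*b‖ := norm_add_le _ _
      _ = 2*‖b‖ + ‖b'-b‖ := by
          rw [norm_mul]; simp; ring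
  have habs_a2 : ‖a' + a‖ ≤ 2*‖a‖ + ‖a'-a‖ := by
    calc ‖a' + a‖ = ‖(a'-a) + 2*a‖ := by ring_nf
      _ ≤ ‖a'-a‖ + ‖2*a‖ := norm_add_le _ _
      _ = 2*‖a‖ + ‖a'-a‖ := by
          rw [norm_mul]; simp; ring
  have hzdec : (starRingEnd ℂ) (a'+a) * (b'+b)
      = 4*((starRingEnd ℂ) a * b) + 2*((starRingEnd ℂ) a * (b'-b))
        + (starRingEnd ℂ) (a'-a) * (b'+b) := by
    rw [map_add, map_sub]
    ring
  have hZIb2 : |((starRingEnd ℂ) (a'+a) * (b'+b)).im|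
      ≤ 4*(‖a‖ * ‖b‖)
        + (2*‖a‖ * ‖b'-b‖
          + ‖a'-a‖ * (2*‖b‖ + ‖b'-b‖)) := by
    have step : |((starRingEnd ℂ) (a'+a) * (b'+b)).im|
        ≤ 4*(‖a‖ * ‖b‖) + 2*‖a‖ * ‖b'-b‖
          + ‖a'-a‖ * ‖b'+b‖ := by
      calc |((starRingEnd ℂ) (a'+a) * (b'+b)).im|
          = |(4*((starRingEnd ℂ) a * b) + 2*((starRingEnd ℂ) a * (b'-b))
            + (starRingEnd ℂ) (a'-a) * (b'+b)).im| := by rw [hzdec]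
        _ ≤ ‖4*((starRingEnd ℂ) a * b) + 2*((starRingEnd ℂ) a * (b'-b))
            + (starRingEnd ℂ) (a'-a) * (b'+b)‖ := Complex.abs_im_le_norm _
        _ ≤ ‖4*((starRingEnd ℂ) a * b) + 2*((starRingEnd ℂ) a * (b'-b))‖
            + ‖(starRingEnd ℂ) (a'-a) * (b'+b)‖ := norm_add_le _ _
        _ ≤ ‖4*((starRingEnd ℂ) a * b)‖ + ‖2*((starRingEnd ℂ) a * (b'-b))‖
            + ‖(starRingEnd ℂ) (a'-a) * (b'+b)‖ := by
            have := norm_add_le (4*((starRingEnd ℂ) a * b)) (2*((starRingEnd ℂ) a * (b'-b)))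
            linarith only [this]
        _ = 4*(‖a‖ * ‖b‖) + 2*‖a‖ * ‖b'-b‖
            + ‖a'-a‖ * ‖b'+b‖ := by
            simp only [norm_mul, Complex.norm_conj, Complex.norm_ofNat]
            ring
    have step2 : ‖a'-a‖ * ‖b'+b‖
        ≤ ‖a'-a‖ * (2*‖b‖ + ‖b'-b‖) :=
      mul_le_mul_of_nonneg_left habs_b2 (norm_nonneg _)
    linarith only [step, step2]
  -- increment equation bounds
  have hDAb : ‖a'-a‖
      ≤ (|m/2 + β*(Gc a b).re/2| * ‖b'+b‖
        + (|α|/2*(‖b‖)^2) * ‖a'+a‖ + ‖g1‖) * h := by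
    have e : ‖a'-a‖
        = ‖Complex.I * ((m/2 + β*(Gc a b).re/2 : ℝ):ℂ) * (b' + b)
          + Complex.I * ((α/2*(‖b‖)^2 : ℝ):ℂ) * (a' + a) + g1‖ * h := by
      rw [e1', norm_mul, Complex.norm_real, Real.norm_eq_abs, abs_of_pos h0]
    rw [e]
    refine mul_le_mul_of_nonneg_right ?_ h0.le
    calc ‖Complex.I * ((m/2 + β*(Gc a b).re/2 : ℝ):ℂ) * (b' + b)
          + Complex.I * ((α/2*(‖b‖)^2 : ℝ):ℂ) * (a' + a) + g1‖
        ≤ ‖Complex.I * ((m/2 + β*(Gc a b).re/2 : ℝ):ℂ) * (b' + b)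
          + Complex.I * ((α/2*(‖b‖)^2 : ℝ):ℂ) * (a' + a)‖ + ‖g1‖ :=
          norm_add_le _ _
      _ ≤ ‖Complex.I * ((m/2 + β*(Gc a b).re/2 : ℝ):ℂ) * (b' + b)‖
          + ‖Complex.I * ((α/2*(‖b‖)^2 : ℝ):ℂ) * (a' + a)‖
          + ‖g1‖ := by
          have := norm_add_le (Complex.I * ((m/2 + β*(Gc a b).re/2 : ℝ):ℂ) * (b' + b))
            (Complex.I * ((α/2*(‖b‖)^2 : ℝ):ℂ) * (a' + a))
          linarith only [this]
      _ = |m/2 + β*(Gc a b).re/2| * ‖b'+b‖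
          + (|α|/2*(‖b‖)^2) * ‖a'+a‖ + ‖g1‖ := by
          rw [abs_I_mul_real, abs_I_mul_real]
          have : |α/2*(‖b‖)^2| = |α|/2*(‖b‖)^2 := by
            rw [_root_.abs_mul, _root_.abs_div]
            simp [_root_.abs_of_nonneg (sq_nonneg (‖b‖))]
          rw [this]
  have hDBb : ‖b'-b‖
      ≤ (|m/2 + β*(Gc a b).re/2| * ‖a'+a‖
        + (|α|/2*(‖a‖)^2) * ‖b'+b‖ + ‖g2‖) * h := by
    have e : ‖b'-b‖
        = ‖Complex.I * ((m/2 + β*(Gc a b).re/2 : ℝ):ℂ) * (a' + a)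
          + Complex.I * ((α/2*(‖a‖)^2 : ℝ):ℂ) * (b' + b) + g2‖ * h := by
      rw [e2', norm_mul, Complex.norm_real, Real.norm_eq_abs, abs_of_pos h0]
    rw [e]
    refine mul_le_mul_of_nonneg_right ?_ h0.le
    calc ‖Complex.I * ((m/2 + β*(Gc a b).re/2 : ℝ):ℂ) * (a' + a)
          + Complex.I * ((α/2*(‖a‖)^2 : ℝ):ℂ) * (b' + b) + g2‖
        ≤ ‖Complex.I * ((m/2 + β*(Gc a b).re/2 : ℝ):ℂ) * (a' + a)
          + Complex.I * ((α/2*(‖a‖)^2 : ℝ):ℂ) * (b' + b)‖ + ‖g2‖ :=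
          norm_add_le _ _
      _ ≤ ‖Complex.I * ((m/2 + β*(Gc a b).re/2 : ℝ):ℂ) * (a' + a)‖
          + ‖Complex.I * ((α/2*(‖a‖)^2 : ℝ):ℂ) * (b' + b)‖
          + ‖g2‖ := by
          have := norm_add_le (Complex.I * ((m/2 + β*(Gc a b).re/2 : ℝ):ℂ) * (a' + a))
            (Complex.I * ((α/2*(‖a‖)^2 : ℝ):ℂ) * (b' + b))
          linarith only [this]
      _ = |m/2 + β*(Gc a b).re/2| * ‖a'+a‖
          + (|α|/2*(‖a‖)^2) * ‖b'+b‖ + ‖g2‖ := by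
          rw [abs_I_mul_real, abs_I_mul_real]
          have : |α/2*(‖a‖)^2| = |α|/2*(‖a‖)^2 := by
            rw [_root_.abs_mul, _root_.abs_div]
            simp [_root_.abs_of_nonneg (sq_nonneg (‖a‖))]
          rw [this]
  -- finish
  have goalred : |‖a'‖ ^ 2 - ‖a‖ ^ 2| / h
      = |(-(m/2 + β*(Gc a b).re/2) * ((starRingEnd ℂ) (a'+a) * (b'+b)).im
        + ((starRingEnd ℂ) (a'+a) * g1).re)| := by
    rw [key1, abs_mul, abs_of_pos h0, mul_div_cancel_right₀ _ h0.ne']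
  rw [goalred]
  refine realmain m α β h (‖a‖) (‖b‖) (‖a'‖) (‖b'‖)
    (‖g1‖) (‖g2‖) (‖a'-a‖) (‖b'-b‖)
    (‖b'+b‖) (‖a'+a‖)
    (((starRingEnd ℂ) (a'+a) * (b'+b)).im) (((starRingEnd ℂ) (a'+a) * g1).re)
    (m/2 + β*(Gc a b).re/2) ((Gc a b).re)
    hm h0 h2 (norm_nonneg a) (norm_nonneg b) (norm_nonneg a')
    (norm_nonneg b') (norm_nonneg g1) (norm_nonneg g2)
    (norm_nonneg _) (norm_nonneg _) (norm_nonneg _) (norm_nonneg _)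
    (Gc_re_bound a b) rfl hmasseq hZIb1 ?_ hR1b
    (norm_add_le b' b) habs_b2 (norm_add_le a' a) habs_a2
    hDAb hDBb hδ
  · exact hZIb2

/-- Local evolution estimates for the inhomogeneous QLB scheme: there are constants
`δ₁, C₂ > 0` depending only on `m, α, β` such that the stated bounds hold. -/
theorem stmt8 (m α β : ℝ) (hm : 0 ≤ m) :
    ∃ δ₁ > (0 : ℝ), ∃ C₂ > (0 : ℝ), ∀ h : ℝ, 0 < h → h < 1 / 2 →
      ∀ g1 g2 u v : ℕ → ℤ → ℂ, IsQLBInhom h m α β g1 g2 u v →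
        ∀ (k : ℕ) (n : ℤ),
          (‖u k n‖ ^ 2 + ‖v k n‖ ^ 2) * h ≤ δ₁ →
          |‖u (k + 1) (n + 1)‖ ^ 2 - ‖u k n‖ ^ 2| / h
            ≤ C₂ * ((‖u k n‖ ^ 2 + ‖v k n‖ ^ 2)
              + ‖u k n‖ ^ 2 * ‖v k n‖ ^ 2
              + (‖g1 k n‖ ^ 2 + ‖g2 k n‖ ^ 2)) ∧
          |‖v (k + 1) (n - 1)‖ ^ 2 - ‖v k n‖ ^ 2| / h
            ≤ C₂ * ((‖u k n‖ ^ 2 + ‖v k n‖ ^ 2)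
              + ‖u k n‖ ^ 2 * ‖v k n‖ ^ 2
              + (‖g1 k n‖ ^ 2 + ‖g2 k n‖ ^ 2)) := by
  have hKpos : (0:ℝ) < m + |α| + |β| + 1 := by
    have := abs_nonneg α
    have := abs_nonneg β
    linarith
  refine ⟨1 / (1 + 2*(|α| + |β|)), by positivity,
    1000 * (m + |α| + |β| + 1)^3, by positivity, ?_⟩
  intro h h0 h2 g1 g2 u v hsol k n hsm
  obtain ⟨e1, e2⟩ := hsol k n
  constructor
  · exact master m α β h hm h0 h2 (u k n) (v k n) (u (k+1) (n+1)) (v (k+1) (n-1))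
      (g1 k n) (g2 k n) e1 e2 hsm
  · rw [Gc_comm (u k n) (v k n)] at e2 e1
    have hδ' : (‖v k n‖ ^ 2 + ‖u k n‖ ^ 2) * h
        ≤ 1 / (1 + 2*(|α| + |β|)) := by linarith only [hsm]
    have res := master m α β h hm h0 h2 (v k n) (u k n) (v (k+1) (n-1)) (u (k+1) (n+1))
      (g2 k n) (g1 k n) e2 e1 hδ'
    linarith only [res]


end
end

section
/- Under the initial-data assumptions, for every ε > 0 there exist constants A_ε > 0 and h_ε ∈ (0,1), independent of h, such that for all h ∈ (0,h_ε) and all t ≥ 0: ∫_{|x| ≥ A_ε + t} (|u^{(h)}(x,t)|² + |v^{(h)}(x,t)|²) dx ≤ ε. -/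
open Complex MeasureTheory Filter
open scoped ENNReal NNReal

noncomputable section

/-- The piecewise-constant interpolant: `interp h w x t = w^k_n` for
`x ∈ [nh, (n+1)h)` and `t ∈ [kh, (k+1)h)` (for `t ≥ 0`). -/
def interp (h : ℝ) (w : ℕ → ℤ → ℂ) (x t : ℝ) : ℂ := w ⌊t / h⌋₊ ⌊x / h⌋

/-! ### Auxiliary lemmas -/

lemma key_lin (a b a' b' ca cb ca' cb' c p q1 q2 : ℂ)
    (h1 : a' - a = c*(q1*(a'+a)+p*(b'+b)))
    (h2 : b' - b = c*(q2*(b'+b)+p*(a'+a)))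
    (h1' : ca' - ca = -c*(q1*(ca'+ca)+p*(cb'+cb)))
    (h2' : cb' - cb = -c*(q2*(cb'+cb)+p*(ca'+ca))) :
    a'*ca' + b'*cb' = a*ca + b*cb := by
  linear_combination ((ca'+ca)/2)*h1 + ((a'+a)/2)*h1' + ((cb'+cb)/2)*h2 + ((b'+b)/2)*h2'

lemma Gc_conj (a b : ℂ) : (starRingEnd ℂ) (Gc a b) = Gc a b := by
  simp [Gc]; ring

lemma energy_cons {h m α β : ℝ} {a b a' b' : ℂ} (hs : QLBStep h m α β a b a' b') :
    ‖a'‖ ^ 2 + ‖b'‖ ^ 2 = ‖a‖ ^ 2 + ‖b‖ ^ 2 := by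
  set c : ℂ := Complex.I * (h : ℂ) / 2 with hc
  set p : ℂ := (m : ℂ) + (β : ℂ) * Gc a b with hp
  set q1 : ℂ := (α : ℂ) * ((‖b‖ ^ 2 : ℝ) : ℂ) with hq1
  set q2 : ℂ := (α : ℂ) * ((‖a‖ ^ 2 : ℝ) : ℂ) with hq2
  have hcc : (starRingEnd ℂ) c = -c := by simp [hc, map_div₀, map_ofNat]; ring
  have hpc : (starRingEnd ℂ) p = p := by simp [hp, Gc_conj]
  have hq1c : (starRingEnd ℂ) q1 = q1 := by simp [hq1]
  have hq2c : (starRingEnd ℂ) q2 = q2 := by simp [hq2]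
  have h1 : a' - a = c*(q1*(a'+a)+p*(b'+b)) := by
    rw [hc, hp, hq1]; linear_combination hs.1
  have h2 : b' - b = c*(q2*(b'+b)+p*(a'+a)) := by
    rw [hc, hp, hq2]; linear_combination hs.2
  have h1' : (starRingEnd ℂ) a' - (starRingEnd ℂ) a =
      -c*(q1*((starRingEnd ℂ) a'+(starRingEnd ℂ) a)+p*((starRingEnd ℂ) b'+(starRingEnd ℂ) b)) := by
    have := congrArg (starRingEnd ℂ) h1
    simpa [map_sub, map_mul, map_add, hcc, hpc, hq1c] using this
  have h2' : (starRingEnd ℂ) b' - (starRingEnd ℂ) b =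
      -c*(q2*((starRingEnd ℂ) b'+(starRingEnd ℂ) b)+p*((starRingEnd ℂ) a'+(starRingEnd ℂ) a)) := by
    have := congrArg (starRingEnd ℂ) h2
    simpa [map_sub, map_mul, map_add, hcc, hpc, hq2c] using this
  have key := key_lin a b a' b' _ _ _ _ c p q1 q2 h1 h2 h1' h2'
  rw [Complex.mul_conj, Complex.mul_conj, Complex.mul_conj, Complex.mul_conj] at key
  have : (Complex.normSq a' + Complex.normSq b' : ℝ) = Complex.normSq a + Complex.normSq b := by
    exact_mod_cast key
  simpa [Complex.sq_norm] using this

lemma energy_cons_ennreal {h m α β : ℝ} {a b a' b' : ℂ} (hs : QLBStep h m α β a b a' b') :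
    (‖a'‖₊ : ℝ≥0∞)^2 + (‖b'‖₊ : ℝ≥0∞)^2 = (‖a‖₊ : ℝ≥0∞)^2 + (‖b‖₊ : ℝ≥0∞)^2 := by
  have hr := energy_cons hs
  have hn : (‖a'‖₊ : ℝ≥0)^2 + (‖b'‖₊ : ℝ≥0)^2 = (‖a‖₊ : ℝ≥0)^2 + (‖b‖₊ : ℝ≥0)^2 := by
    apply NNReal.coe_injective
    push_cast [coe_nnnorm]
    exact hr
  exact_mod_cast congrArg (fun x : ℝ≥0 => (x : ℝ≥0∞)) hn

/-- Tail sum of a lattice energy. -/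
def tailSum (e : ℤ → ℝ≥0∞) (N : ℤ) : ℝ≥0∞ :=
  ∑' n : ℤ, if N ≤ |n| then e n else 0

lemma tail_step (f g f' g' : ℤ → ℝ≥0∞)
    (hcons : ∀ n, f' (n+1) + g' (n-1) = f n + g n) (N : ℤ) :
    tailSum (fun n => f' n + g' n) N ≤ tailSum (fun n => f n + g n) (N - 1) := by
  have split : tailSum (fun n => f' n + g' n) N
      = (∑' n : ℤ, if N ≤ |n| then f' n else 0) + (∑' n : ℤ, if N ≤ |n| then g' n else 0) := by
    rw [tailSum, ← ENNReal.tsum_add]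
    congr 1; funext n; by_cases hn : N ≤ |n| <;> simp [hn]
  rw [split]
  have hf : (∑' n : ℤ, if N ≤ |n| then f' n else 0)
      = ∑' m : ℤ, if N ≤ |m + 1| then f' (m + 1) else 0 :=
    ((Equiv.addRight (1:ℤ)).tsum_eq (fun n => if N ≤ |n| then f' n else 0)).symm
  have hg : (∑' n : ℤ, if N ≤ |n| then g' n else 0)
      = ∑' m : ℤ, if N ≤ |m - 1| then g' (m - 1) else 0 :=
    ((Equiv.subRight (1:ℤ)).tsum_eq (fun n => if N ≤ |n| then g' n else 0)).symm
  rw [hf, hg]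
  have h1 : ∀ m : ℤ, (if N ≤ |m + 1| then f' (m + 1) else 0)
      ≤ (if N - 1 ≤ |m| then f' (m + 1) else 0) := by
    intro m
    by_cases hm : N ≤ |m + 1|
    · have : N - 1 ≤ |m| := by
        have := abs_add_le m 1
        simp only [abs_one] at this
        omega
      simp [hm, this]
    · simp [hm]
  have h2 : ∀ m : ℤ, (if N ≤ |m - 1| then g' (m - 1) else 0)
      ≤ (if N - 1 ≤ |m| then g' (m - 1) else 0) := by
    intro m
    by_cases hm : N ≤ |m - 1|
    · have : N - 1 ≤ |m| := by
        have := abs_sub m (1:ℤ)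
        simp only [abs_one] at this
        omega
      simp [hm, this]
    · simp [hm]
  calc (∑' m : ℤ, if N ≤ |m + 1| then f' (m + 1) else 0)
        + (∑' m : ℤ, if N ≤ |m - 1| then g' (m - 1) else 0)
      ≤ (∑' m : ℤ, if N - 1 ≤ |m| then f' (m + 1) else 0)
        + (∑' m : ℤ, if N - 1 ≤ |m| then g' (m - 1) else 0) :=
        add_le_add (ENNReal.tsum_le_tsum h1) (ENNReal.tsum_le_tsum h2)
    _ = ∑' m : ℤ, if N - 1 ≤ |m| then f' (m + 1) + g' (m - 1) else 0 := by
        rw [← ENNReal.tsum_add]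
        congr 1; funext n; by_cases hn : N - 1 ≤ |n| <;> simp [hn]
    _ = tailSum (fun n => f n + g n) (N - 1) := by
        rw [tailSum]
        congr 1; funext n
        by_cases hn : N - 1 ≤ |n| <;> simp [hn, hcons n]

lemma tail_iter (eU eV : ℕ → ℤ → ℝ≥0∞)
    (hcons : ∀ k n, eU (k+1) (n+1) + eV (k+1) (n-1) = eU k n + eV k n) :
    ∀ (k : ℕ) (N : ℤ), tailSum (fun n => eU k n + eV k n) N
      ≤ tailSum (fun n => eU 0 n + eV 0 n) (N - (k : ℤ)) := by
  intro k
  induction k with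
  | zero => intro N; simp
  | succ k ih =>
    intro N
    calc tailSum (fun n => eU (k+1) n + eV (k+1) n) N
        ≤ tailSum (fun n => eU k n + eV k n) (N - 1) := tail_step _ _ _ _ (hcons k) N
      _ ≤ tailSum (fun n => eU 0 n + eV 0 n) (N - 1 - (k:ℤ)) := ih (N-1)
      _ = tailSum (fun n => eU 0 n + eV 0 n) (N - ((k:ℕ)+1 : ℕ)) := by
          congr 1; push_cast; ring

lemma lintegral_floor_cells {h : ℝ} (hh : 0 < h) (ψ : ℤ → ℝ≥0∞) :
    ∫⁻ x : ℝ, ψ ⌊x / h⌋ = (∑' n : ℤ, ψ n) * ENNReal.ofReal h := by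
  have hfl : ∀ (n : ℤ) (x : ℝ), x ∈ Set.Ico ((n:ℝ)*h) ((n+1)*h) → ⌊x/h⌋ = n := by
    rintro n x ⟨h1, h2⟩
    rw [Int.floor_eq_iff]
    constructor
    · rwa [le_div_iff₀ hh]
    · rw [div_lt_iff₀ hh]; linarith
  have hU : (⋃ n : ℤ, Set.Ico ((n:ℝ)*h) ((n+1)*h)) = Set.univ := by
    ext x
    simp only [Set.mem_iUnion, Set.mem_univ, iff_true]
    refine ⟨⌊x/h⌋, ?_, ?_⟩
    · rw [← le_div_iff₀ hh]; exact Int.floor_le _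
    · rw [← div_lt_iff₀ hh]; exact Int.lt_floor_add_one _
  have hdisj : Pairwise (Function.onFun Disjoint (fun n : ℤ => Set.Ico ((n:ℝ)*h) ((n+1)*h))) := by
    intro i j hij
    rw [Function.onFun, Set.disjoint_left]
    intro x hxi hxj
    exact hij ((hfl i x hxi).symm.trans (hfl j x hxj))
  have hmeas : ∀ n : ℤ, MeasurableSet (Set.Ico ((n:ℝ)*h) ((n+1)*h)) := fun n => measurableSet_Ico
  calc ∫⁻ x : ℝ, ψ ⌊x / h⌋
      = ∫⁻ x in (⋃ n : ℤ, Set.Ico ((n:ℝ)*h) ((n+1)*h)), ψ ⌊x / h⌋ := by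
        rw [hU, Measure.restrict_univ]
    _ = ∑' n : ℤ, ∫⁻ x in Set.Ico ((n:ℝ)*h) ((n+1)*h), ψ ⌊x / h⌋ := lintegral_iUnion hmeas hdisj _
    _ = ∑' n : ℤ, (ψ n) * ENNReal.ofReal h := by
        congr 1; funext n
        rw [setLIntegral_congr_fun_ae (hmeas n) (ae_of_all _ (fun x hx => by rw [hfl n x hx]))]
        rw [setLIntegral_const, Real.volume_Ico]
        congr 1; ring
    _ = (∑' n : ℤ, ψ n) * ENNReal.ofReal h := ENNReal.tsum_mul_right

lemma lintegral_le_tailSum {h : ℝ} (hh : 0 < h) (φ : ℤ → ℝ≥0∞) {S : Set ℝ}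
    (hSm : MeasurableSet S) (N : ℤ) (hS : ∀ x ∈ S, N ≤ |⌊x / h⌋|) :
    ∫⁻ x in S, φ ⌊x / h⌋ ≤ tailSum φ N * ENNReal.ofReal h := by
  unfold tailSum
  have heq : ∫⁻ x in S, φ ⌊x / h⌋
      = ∫⁻ x in S, (if N ≤ |⌊x / h⌋| then φ ⌊x / h⌋ else 0) := by
    apply setLIntegral_congr_fun_ae hSm
    exact ae_of_all _ (fun x hx => by rw [if_pos (hS x hx)])
  rw [heq]
  calc ∫⁻ x in S, (if N ≤ |⌊x / h⌋| then φ ⌊x / h⌋ else 0)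
      ≤ ∫⁻ x : ℝ, (fun n => if N ≤ |n| then φ n else 0) ⌊x / h⌋ := setLIntegral_le_lintegral _ _
    _ = (∑' n : ℤ, if N ≤ |n| then φ n else 0) * ENNReal.ofReal h :=
        lintegral_floor_cells hh (fun n => if N ≤ |n| then φ n else 0)

lemma tailSum_le_lintegral {h : ℝ} (hh : 0 < h) (φ : ℤ → ℝ≥0∞) {S : Set ℝ}
    (hSm : MeasurableSet S) (N : ℤ) (hS : ∀ x : ℝ, N ≤ |⌊x / h⌋| → x ∈ S) :
    tailSum φ N * ENNReal.ofReal h ≤ ∫⁻ x in S, φ ⌊x / h⌋ := by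
  unfold tailSum
  rw [← lintegral_floor_cells hh (fun n => if N ≤ |n| then φ n else 0)]
  rw [← lintegral_add_compl (μ := volume) _ hSm]
  have hzero : ∫⁻ x in Sᶜ, (fun n => if N ≤ |n| then φ n else 0) ⌊x / h⌋ = 0 := by
    have hz : ∀ x ∈ Sᶜ, (fun n => if N ≤ |n| then φ n else 0) ⌊x / h⌋ = (fun _ : ℝ => (0:ℝ≥0∞)) x := by
      intro x hx
      simp only
      rw [if_neg (fun hc => hx (hS x hc))]
    rw [setLIntegral_congr_fun_ae hSm.compl (ae_of_all _ hz), lintegral_zero]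
  rw [hzero, add_zero]
  apply setLIntegral_mono' hSm
  intro x _
  split_ifs <;> simp

lemma lint_sq_eq (f : ℝ → ℂ) :
    ∫⁻ x, (‖f x‖₊ : ℝ≥0∞) ^ 2 ∂(volume : Measure ℝ) = (eLpNorm f 2 volume) ^ 2 := by
  rw [eLpNorm_eq_lintegral_rpow_enorm_toReal two_ne_zero ENNReal.ofNat_ne_top]
  rw [ENNReal.toReal_ofNat]
  rw [← ENNReal.rpow_natCast (_ ^ (1 / (2:ℝ))) 2, ← ENNReal.rpow_mul]
  norm_num
  rfl

lemma ptwise_sq (a b : ℂ) :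
    (‖a‖₊ : ℝ≥0∞) ^ 2 ≤ 2 * (‖a - b‖₊ : ℝ≥0∞) ^ 2 + 2 * (‖b‖₊ : ℝ≥0∞) ^ 2 := by
  have hr : ‖a‖ ^ 2 ≤ 2 * ‖a - b‖ ^ 2 + 2 * ‖b‖ ^ 2 := by
    have h1 : ‖a‖ ≤ ‖a - b‖ + ‖b‖ := by
      calc ‖a‖ = ‖a - b + b‖ := by ring_nf
        _ ≤ ‖a - b‖ + ‖b‖ := norm_add_le _ _
    have h2 : ‖a‖ ^ 2 ≤ (‖a - b‖ + ‖b‖) ^ 2 := pow_le_pow_left₀ (norm_nonneg a) h1 2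
    nlinarith [sq_nonneg (‖a - b‖ - ‖b‖)]
  have hn : (‖a‖₊ : ℝ≥0) ^ 2 ≤ 2 * (‖a - b‖₊ : ℝ≥0) ^ 2 + 2 * (‖b‖₊ : ℝ≥0) ^ 2 := by
    rw [← NNReal.coe_le_coe]
    push_cast [coe_nnnorm]
    exact hr
  exact_mod_cast ENNReal.coe_le_coe.mpr hn

lemma tail_to_zero (g : ℝ → ℝ≥0∞) (hfin : ∫⁻ x, g x ∂(volume : Measure ℝ) ≠ ∞)
    (δ : ℝ≥0∞) (hδ : 0 < δ) :
    ∃ A : ℝ, 0 < A ∧ ∫⁻ x in {x : ℝ | A ≤ |x|}, g x ≤ δ := by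
  set ν : Measure ℝ := (volume : Measure ℝ).withDensity g with hν
  have hmeas : ∀ n : ℕ, MeasurableSet {x : ℝ | (n : ℝ) ≤ |x|} := fun n =>
    measurableSet_le measurable_const measurable_id.abs
  have hanti : Antitone (fun n : ℕ => {x : ℝ | (n : ℝ) ≤ |x|}) := by
    intro i j hij x hx
    simp only [Set.mem_setOf_eq] at hx ⊢
    exact le_trans (by exact_mod_cast hij) hx
  have hinter : (⋂ n : ℕ, {x : ℝ | (n : ℝ) ≤ |x|}) = ∅ := by
    ext x
    simp only [Set.mem_iInter, Set.mem_setOf_eq, Set.mem_empty_iff_false, iff_false, not_forall]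
    obtain ⟨n, hn⟩ := exists_nat_gt |x|
    exact ⟨n, not_le.mpr hn⟩
  have hb : ∀ s : Set ℝ, MeasurableSet s → ν s = ∫⁻ x in s, g x ∂volume := fun s hs =>
    withDensity_apply g hs
  have hfin' : ν {x : ℝ | ((0:ℕ) : ℝ) ≤ |x|} ≠ ∞ := by
    rw [hb _ (hmeas 0)]
    exact ne_top_of_le_ne_top hfin (setLIntegral_le_lintegral _ _)
  have htends : Tendsto (fun n : ℕ => ν {x : ℝ | (n : ℝ) ≤ |x|}) atTop (nhds 0) := by
    have := tendsto_measure_iInter_atTop (μ := ν)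
      (fun n => (hmeas n).nullMeasurableSet) hanti ⟨0, hfin'⟩
    rwa [hinter, measure_empty] at this
  obtain ⟨n, hn⟩ := (htends.eventually_lt_const hδ).exists
  refine ⟨(n : ℝ) + 1, by positivity, ?_⟩
  have hsub : {x : ℝ | (n : ℝ) + 1 ≤ |x|} ⊆ {x : ℝ | (n : ℝ) ≤ |x|} := by
    intro x hx; simp only [Set.mem_setOf_eq] at hx ⊢; linarith
  have hms : MeasurableSet {x : ℝ | (n : ℝ) + 1 ≤ |x|} :=
    measurableSet_le measurable_const measurable_id.abs
  calc ∫⁻ x in {x : ℝ | (n : ℝ) + 1 ≤ |x|}, g x = ν _ := (hb _ hms).symm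
    _ ≤ ν {x : ℝ | (n : ℝ) ≤ |x|} := measure_mono hsub
    _ ≤ δ := hn.le

lemma floor_abs_bounds {h x : ℝ} (hh : 0 < h) :
    |(⌊x/h⌋ : ℝ)| * h - h ≤ |x| ∧ |x| < |(⌊x/h⌋ : ℝ)| * h + h := by
  have hn1 : (⌊x/h⌋ : ℝ) * h ≤ x := by
    rw [← le_div_iff₀ hh]; exact Int.floor_le _
  have hn2 : x < ((⌊x/h⌋ : ℝ) + 1) * h := by
    rw [← div_lt_iff₀ hh]; exact Int.lt_floor_add_one _
  rcases le_or_gt 0 ((⌊x/h⌋ : ℝ)) with hfl | hfl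
  · have hx0 : 0 ≤ x := le_trans (mul_nonneg hfl hh.le) hn1
    rw [_root_.abs_of_nonneg hfl, _root_.abs_of_nonneg hx0]
    constructor <;> nlinarith
  · have hfl1 : (⌊x/h⌋ : ℝ) + 1 ≤ 0 := by
      have hz : ⌊x/h⌋ < 0 := by exact_mod_cast hfl
      exact_mod_cast (by omega : ⌊x/h⌋ + 1 ≤ 0)
    have hx0 : x < 0 := by nlinarith
    rw [_root_.abs_of_neg hfl, _root_.abs_of_neg hx0]
    constructor <;> nlinarith

/-- Uniform smallness of the tails: for every `ε > 0` there are `A_ε > 0` and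
`h_ε ∈ (0,1)` with `∫_{|x| ≥ A_ε + t} (|u^{(h)}|² + |v^{(h)}|²) dx ≤ ε` for all
`h ∈ (0, h_ε)` and `t ≥ 0`. -/
theorem stmt14 (m α β : ℝ) (hm : 0 ≤ m)
    (U V : ℝ → ℕ → ℤ → ℂ)
    (hQLB : ∀ h : ℝ, 0 < h → h < 1 → IsQLB h m α β (U h) (V h))
    (u₀ v₀ : ℝ → ℂ) (hu₀ : MemLp u₀ 2 (volume : Measure ℝ))
    (hv₀ : MemLp v₀ 2 (volume : Measure ℝ))
    (hbdd : ∃ M : ℝ, ∀ h : ℝ, 0 < h → h < 1 →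
      eLpNorm (fun x => interp h (U h) x 0) 2 (volume : Measure ℝ) ≤ ENNReal.ofReal M ∧
      eLpNorm (fun x => interp h (V h) x 0) 2 (volume : Measure ℝ) ≤ ENNReal.ofReal M)
    (hconv : Tendsto (fun h : ℝ =>
        eLpNorm (fun x => interp h (U h) x 0 - u₀ x) 2 (volume : Measure ℝ)
        + eLpNorm (fun x => interp h (V h) x 0 - v₀ x) 2 (volume : Measure ℝ))
      (nhdsWithin 0 (Set.Ioi 0)) (nhds 0)) :
    ∀ ε > (0 : ℝ), ∃ A > (0 : ℝ), ∃ hε : ℝ, 0 < hε ∧ hε < 1 ∧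
      ∀ h : ℝ, 0 < h → h < hε → ∀ t : ℝ, 0 ≤ t →
        (∫ x in {x : ℝ | A + t ≤ |x|},
          (‖interp h (U h) x t‖ ^ 2 + ‖interp h (V h) x t‖ ^ 2)) ≤ ε := by
  intro ε hε
  set ε' : ℝ≥0∞ := ENNReal.ofReal ε with hε'def
  have hε'pos : 0 < ε' := ENNReal.ofReal_pos.mpr hε
  have hε8 : 0 < ε' / 8 := ENNReal.div_pos hε'pos.ne' (by norm_num)
  -- measurable versions of the initial data and their combined energy density
  have hu₀sm := hu₀.1.stronglyMeasurable_mk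
  have hv₀sm := hv₀.1.stronglyMeasurable_mk
  set u₁ : ℝ → ℂ := hu₀.1.mk u₀ with hu₁def
  set v₁ : ℝ → ℂ := hv₀.1.mk v₀ with hv₁def
  have hu₁ae : u₀ =ᵐ[volume] u₁ := hu₀.1.ae_eq_mk
  have hv₁ae : v₀ =ᵐ[volume] v₁ := hv₀.1.ae_eq_mk
  set g0 : ℝ → ℝ≥0∞ := fun x => (‖u₁ x‖₊ : ℝ≥0∞)^2 + (‖v₁ x‖₊ : ℝ≥0∞)^2 with hg0def
  have hg0meas : Measurable g0 :=
    ((hu₀sm.measurable.enorm).pow_const 2).add ((hv₀sm.measurable.enorm).pow_const 2)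
  have hg0fin : ∫⁻ x, g0 x ∂(volume : Measure ℝ) ≠ ∞ := by
    have h1 : ∫⁻ x, (‖u₁ x‖₊ : ℝ≥0∞)^2 ∂(volume : Measure ℝ) = (eLpNorm u₀ 2 volume)^2 := by
      rw [← lint_sq_eq u₀]
      exact lintegral_congr_ae (by filter_upwards [hu₁ae] with x hx; rw [hx]) |>.symm
    have h2 : ∫⁻ x, (‖v₁ x‖₊ : ℝ≥0∞)^2 ∂(volume : Measure ℝ) = (eLpNorm v₀ 2 volume)^2 := by
      rw [← lint_sq_eq v₀]
      exact lintegral_congr_ae (by filter_upwards [hv₁ae] with x hx; rw [hx]) |>.symm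
    rw [hg0def, lintegral_add_left (f := fun x => (‖u₁ x‖₊ : ℝ≥0∞)^2) ((hu₀sm.measurable.enorm).pow_const 2), h1, h2]
    exact ENNReal.add_ne_top.mpr ⟨ENNReal.pow_ne_top hu₀.2.ne, ENNReal.pow_ne_top hv₀.2.ne⟩
  obtain ⟨A₀, hA₀pos, hA₀⟩ := tail_to_zero g0 hg0fin (ε'/8) hε8
  set A : ℝ := A₀ + 2 with hAdef
  refine ⟨A, by positivity, ?_⟩
  -- choose hε from the convergence hypothesis
  set c : ℝ≥0∞ := min 1 (ε'/8) with hcdef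
  have hcpos : 0 < c := lt_min one_pos hε8
  have hev := hconv.eventually_lt_const hcpos
  obtain ⟨w, hw, hsub⟩ := mem_nhdsGT_iff_exists_Ioo_subset.mp hev
  have hw0 : (0:ℝ) < w := hw
  refine ⟨min w 1 / 2, by positivity, ?_, ?_⟩
  · calc min w 1 / 2 ≤ 1 / 2 := by gcongr; exact min_le_right _ _
      _ < 1 := by norm_num
  intro h h0 hlt t ht
  have h1 : h < 1 := by
    have : min w 1 / 2 ≤ 1 / 2 := by gcongr; exact min_le_right _ _
    linarith
  have hhw : h < w := by
    have : min w 1 / 2 ≤ w / 2 := by gcongr; exact min_le_left _ _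
    linarith
  have hF := hsub ⟨h0, hhw⟩
  simp only [Set.mem_setOf_eq] at hF
  have hFu : eLpNorm (fun x => interp h (U h) x 0 - u₀ x) 2 volume ≤ c :=
    (le_self_add.trans_lt hF).le
  have hFv : eLpNorm (fun x => interp h (V h) x 0 - v₀ x) 2 volume ≤ c :=
    (le_add_self.trans_lt hF).le
  -- setup for the fixed h and t
  have hq := hQLB h h0 h1
  set k : ℕ := ⌊t / h⌋₊ with hkdef
  set eU : ℕ → ℤ → ℝ≥0∞ := fun j n => (‖U h j n‖₊ : ℝ≥0∞)^2 with heUdef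
  set eV : ℕ → ℤ → ℝ≥0∞ := fun j n => (‖V h j n‖₊ : ℝ≥0∞)^2 with heVdef
  have hcons : ∀ j n, eU (j+1) (n+1) + eV (j+1) (n-1) = eU j n + eV j n := fun j n =>
    energy_cons_ennreal (hq j n)
  have hSm : MeasurableSet {x : ℝ | A + t ≤ |x|} :=
    measurableSet_le measurable_const measurable_id.abs
  have hS'm : MeasurableSet {x : ℝ | A₀ ≤ |x|} :=
    measurableSet_le measurable_const measurable_id.abs
  have hflm : Measurable (fun x : ℝ => ⌊x / h⌋) :=
    Int.measurable_floor.comp (measurable_id.div_const h)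
  have hUm : Measurable (fun x : ℝ => interp h (U h) x t) := by
    show Measurable fun x : ℝ => U h ⌊t/h⌋₊ ⌊x/h⌋
    exact measurable_from_top.comp hflm
  have hVm : Measurable (fun x : ℝ => interp h (V h) x t) := by
    show Measurable fun x : ℝ => V h ⌊t/h⌋₊ ⌊x/h⌋
    exact measurable_from_top.comp hflm
  have hfhm : Measurable (fun x : ℝ => interp h (U h) x 0) := by
    show Measurable fun x : ℝ => U h ⌊(0:ℝ)/h⌋₊ ⌊x/h⌋
    exact measurable_from_top.comp hflm
  have hghm : Measurable (fun x : ℝ => interp h (V h) x 0) := by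
    show Measurable fun x : ℝ => V h ⌊(0:ℝ)/h⌋₊ ⌊x/h⌋
    exact measurable_from_top.comp hflm
  -- convert the Bochner integral to a lower Lebesgue integral
  rw [integral_eq_lintegral_of_nonneg_ae (f := fun x => ‖interp h (U h) x t‖ ^ 2 + ‖interp h (V h) x t‖ ^ 2)
    (ae_of_all _ (fun x => by positivity))
    (((hUm.norm.pow_const 2).add (hVm.norm.pow_const 2)).aestronglyMeasurable)]
  apply ENNReal.toReal_le_of_le_ofReal hε.le
  have hof : ∀ x : ℝ, ENNReal.ofReal (‖interp h (U h) x t‖ ^ 2 + ‖interp h (V h) x t‖ ^ 2)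
      = eU k ⌊x/h⌋ + eV k ⌊x/h⌋ := by
    intro x
    rw [ENNReal.ofReal_add (by positivity) (by positivity),
      ENNReal.ofReal_pow (norm_nonneg _), ENNReal.ofReal_pow (norm_nonneg _),
      ofReal_norm, ofReal_norm]
    rfl
  rw [lintegral_congr hof]
  -- the tail index
  set N : ℤ := ⌈A / h⌉ + (k : ℤ) - 1 with hNdef
  have hkh : (k : ℝ) * h ≤ t := by
    rw [← le_div_iff₀ h0]
    exact Nat.floor_le (by positivity)
  have hS : ∀ x ∈ {x : ℝ | A + t ≤ |x|}, N ≤ |⌊x / h⌋| := by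
    intro x hx
    simp only [Set.mem_setOf_eq] at hx
    have hb := (floor_abs_bounds (x := x) h0).2
    have hcast : |((⌊x/h⌋ : ℤ) : ℝ)| = ((|⌊x/h⌋| : ℤ) : ℝ) := by push_cast; ring
    rw [hcast] at hb
    have hceil : ⌈A / h⌉ ≤ |⌊x/h⌋| - (k : ℤ) + 1 := by
      rw [Int.ceil_le]
      have hdiv : A / h < ((|⌊x/h⌋| : ℤ) : ℝ) - (k : ℝ) + 1 := by
        rw [div_lt_iff₀ h0]
        nlinarith [hb, hkh, hx, h0]
      push_cast
      linarith
    omega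
  have hS' : ∀ x : ℝ, ⌈A / h⌉ - 1 ≤ |⌊x / h⌋| → x ∈ {x : ℝ | A₀ ≤ |x|} := by
    intro x hx
    simp only [Set.mem_setOf_eq]
    have hb := (floor_abs_bounds (x := x) h0).1
    have hcast : |((⌊x/h⌋ : ℤ) : ℝ)| = ((|⌊x/h⌋| : ℤ) : ℝ) := by push_cast; ring
    rw [hcast] at hb
    have hxr : A / h - 1 ≤ ((|⌊x/h⌋| : ℤ) : ℝ) := by
      have hle : ((⌈A / h⌉ - 1 : ℤ) : ℝ) ≤ ((|⌊x/h⌋| : ℤ) : ℝ) := by exact_mod_cast hx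
      push_cast at hle
      linarith [Int.le_ceil (A / h)]
    have hAh : (A / h) * h = A := div_mul_cancel₀ A h0.ne'
    nlinarith [mul_le_mul_of_nonneg_right hxr h0.le, hb, h0, h1]
  -- main chain of inequalities
  have hNk : N - (k : ℤ) = ⌈A / h⌉ - 1 := by rw [hNdef]; ring
  calc ∫⁻ x in {x : ℝ | A + t ≤ |x|}, (eU k ⌊x/h⌋ + eV k ⌊x/h⌋)
      ≤ tailSum (fun n => eU k n + eV k n) N * ENNReal.ofReal h :=
        lintegral_le_tailSum h0 _ hSm N hS
    _ ≤ tailSum (fun n => eU 0 n + eV 0 n) (N - (k:ℤ)) * ENNReal.ofReal h :=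
        mul_le_mul_left (tail_iter eU eV hcons k N) _
    _ = tailSum (fun n => eU 0 n + eV 0 n) (⌈A / h⌉ - 1) * ENNReal.ofReal h := by rw [hNk]
    _ ≤ ∫⁻ x in {x : ℝ | A₀ ≤ |x|}, (eU 0 ⌊x/h⌋ + eV 0 ⌊x/h⌋) :=
        tailSum_le_lintegral h0 _ hS'm _ hS'
    _ = ∫⁻ x in {x : ℝ | A₀ ≤ |x|},
          ((‖interp h (U h) x 0‖₊ : ℝ≥0∞)^2 + (‖interp h (V h) x 0‖₊ : ℝ≥0∞)^2) := by
        apply lintegral_congr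
        intro x
        simp only [heUdef, heVdef, interp, zero_div, Nat.floor_zero]
    _ ≤ ∫⁻ x in {x : ℝ | A₀ ≤ |x|},
          ((2 * (‖interp h (U h) x 0 - u₀ x‖₊ : ℝ≥0∞)^2
            + 2 * (‖interp h (V h) x 0 - v₀ x‖₊ : ℝ≥0∞)^2) + 2 * g0 x) := by
        apply lintegral_mono_ae
        filter_upwards [ae_restrict_of_ae hu₁ae, ae_restrict_of_ae hv₁ae] with x hx1 hx2
        have p1 := ptwise_sq (interp h (U h) x 0) (u₀ x)
        have p2 := ptwise_sq (interp h (V h) x 0) (v₀ x)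
        calc (‖interp h (U h) x 0‖₊ : ℝ≥0∞)^2 + (‖interp h (V h) x 0‖₊ : ℝ≥0∞)^2
            ≤ (2 * (‖interp h (U h) x 0 - u₀ x‖₊ : ℝ≥0∞)^2 + 2 * (‖u₀ x‖₊ : ℝ≥0∞)^2)
              + (2 * (‖interp h (V h) x 0 - v₀ x‖₊ : ℝ≥0∞)^2 + 2 * (‖v₀ x‖₊ : ℝ≥0∞)^2) :=
              add_le_add p1 p2
          _ = (2 * (‖interp h (U h) x 0 - u₀ x‖₊ : ℝ≥0∞)^2
              + 2 * (‖interp h (V h) x 0 - v₀ x‖₊ : ℝ≥0∞)^2)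
              + 2 * ((‖u₀ x‖₊ : ℝ≥0∞)^2 + (‖v₀ x‖₊ : ℝ≥0∞)^2) := by ring
          _ = (2 * (‖interp h (U h) x 0 - u₀ x‖₊ : ℝ≥0∞)^2
              + 2 * (‖interp h (V h) x 0 - v₀ x‖₊ : ℝ≥0∞)^2) + 2 * g0 x := by
              rw [hg0def]; simp only [← hx1, ← hx2]
    _ ≤ ε' := by
        have hmu : AEMeasurable (fun x => (‖interp h (U h) x 0 - u₀ x‖₊ : ℝ≥0∞)^2)
            ((volume : Measure ℝ).restrict {x : ℝ | A₀ ≤ |x|}) :=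
          ((hfhm.aemeasurable.sub hu₀.1.aemeasurable).enorm.pow_const 2).restrict
        have hmv : AEMeasurable (fun x => (‖interp h (V h) x 0 - v₀ x‖₊ : ℝ≥0∞)^2)
            ((volume : Measure ℝ).restrict {x : ℝ | A₀ ≤ |x|}) :=
          ((hghm.aemeasurable.sub hv₀.1.aemeasurable).enorm.pow_const 2).restrict
        rw [lintegral_add_right' _ ((hg0meas.const_mul 2).aemeasurable),
          lintegral_add_right' _ (hmv.const_mul 2),
          lintegral_const_mul' _ _ (by norm_num : (2:ℝ≥0∞) ≠ ∞),
          lintegral_const_mul' _ _ (by norm_num : (2:ℝ≥0∞) ≠ ∞),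
          lintegral_const_mul' _ _ (by norm_num : (2:ℝ≥0∞) ≠ ∞)]
        have hc2 : c^2 ≤ ε'/8 := by
          calc c^2 = c * c := sq c
            _ ≤ 1 * (ε'/8) := mul_le_mul' (min_le_left _ _) (min_le_right _ _)
            _ = ε'/8 := one_mul _
        have b1 : ∫⁻ x in {x : ℝ | A₀ ≤ |x|}, (‖interp h (U h) x 0 - u₀ x‖₊ : ℝ≥0∞)^2 ≤ ε'/8 := by
          calc ∫⁻ x in {x : ℝ | A₀ ≤ |x|}, (‖interp h (U h) x 0 - u₀ x‖₊ : ℝ≥0∞)^2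
              ≤ ∫⁻ x, (‖interp h (U h) x 0 - u₀ x‖₊ : ℝ≥0∞)^2 := setLIntegral_le_lintegral _ _
            _ = (eLpNorm (fun x => interp h (U h) x 0 - u₀ x) 2 volume)^2 := lint_sq_eq _
            _ ≤ c^2 := pow_le_pow_left' hFu 2
            _ ≤ ε'/8 := hc2
        have b2 : ∫⁻ x in {x : ℝ | A₀ ≤ |x|}, (‖interp h (V h) x 0 - v₀ x‖₊ : ℝ≥0∞)^2 ≤ ε'/8 := by
          calc ∫⁻ x in {x : ℝ | A₀ ≤ |x|}, (‖interp h (V h) x 0 - v₀ x‖₊ : ℝ≥0∞)^2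
              ≤ ∫⁻ x, (‖interp h (V h) x 0 - v₀ x‖₊ : ℝ≥0∞)^2 := setLIntegral_le_lintegral _ _
            _ = (eLpNorm (fun x => interp h (V h) x 0 - v₀ x) 2 volume)^2 := lint_sq_eq _
            _ ≤ c^2 := pow_le_pow_left' hFv 2
            _ ≤ ε'/8 := hc2
        calc 2 * (∫⁻ x in {x : ℝ | A₀ ≤ |x|}, (‖interp h (U h) x 0 - u₀ x‖₊ : ℝ≥0∞)^2)
              + 2 * (∫⁻ x in {x : ℝ | A₀ ≤ |x|}, (‖interp h (V h) x 0 - v₀ x‖₊ : ℝ≥0∞)^2)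
              + 2 * (∫⁻ x in {x : ℝ | A₀ ≤ |x|}, g0 x)
            ≤ 2 * (ε'/8) + 2 * (ε'/8) + 2 * (ε'/8) := by
              gcongr
          _ = 6 * (ε'/8) := by ring
          _ ≤ 8 * (ε'/8) := mul_le_mul_left (by norm_num) _
          _ = ε' := ENNReal.mul_div_cancel' (by norm_num) (by norm_num)

end
end
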